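/- Suppose k > 2 is a real number such that the inequality |π − p/q| < 1/q^k holds for only finitely many pairs of coprime positive integers (p, q). Then there exists a constant c > 0 such that for all sufficiently large positive integers n, |sin(n)| ≥ c / n^(k−1). -/
import Mathlib

open Real

private lemma jordan_abs {x : ℝ} (hx : |x| ≤ π / 2) : 2 / π * |x| ≤ |Real.sin x| := by
  have hπ := Real.pi_pos
  rcases le_or_gt 0 x with h | h
  · have hx' : x ≤ π / 2 := by rwa [abs_of_nonneg h] at hx
    have hs : 0 ≤ Real.sin x :=
      Real.sin_nonneg_of_nonneg_of_le_pi h (hx'.trans (by linarith))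
    rw [abs_of_nonneg h, abs_of_nonneg hs]
    exact Real.mul_le_sin h hx'
  · have hx' : -x ≤ π / 2 := by rw [abs_of_neg h] at hx; linarith
    have hs : 0 ≤ Real.sin (-x) :=
      Real.sin_nonneg_of_nonneg_of_le_pi (by linarith) (hx'.trans (by linarith))
    rw [Real.sin_neg] at hs
    rw [abs_of_neg h, abs_of_nonpos (by linarith)]
    have := Real.mul_le_sin (x := -x) (by linarith) hx'
    rw [Real.sin_neg] at this
    linarith

set_option maxHeartbeats 1000000 in
open Real in
theorem sin_nat_poly_lower_bound (k : ℝ) (hk : 2 < k)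
    (hfin : {pq : ℕ × ℕ | 0 < pq.1 ∧ 0 < pq.2 ∧ Nat.Coprime pq.1 pq.2 ∧
        |π - (pq.1 : ℝ) / (pq.2 : ℝ)| < 1 / (pq.2 : ℝ) ^ k}.Finite) :
    ∃ c > 0, ∃ N : ℕ, ∀ n : ℕ, N ≤ n →
      c / (n : ℝ) ^ (k - 1) ≤ |Real.sin n| := by
  classical
  have hπ := Real.pi_pos
  have hπ4 : π < 4 := by linarith [Real.pi_lt_d2]
  have hπ3 : 3 < π := Real.pi_gt_three
  set S := {pq : ℕ × ℕ | 0 < pq.1 ∧ 0 < pq.2 ∧ Nat.Coprime pq.1 pq.2 ∧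
        |π - (pq.1 : ℝ) / (pq.2 : ℝ)| < 1 / (pq.2 : ℝ) ^ k} with hS
  set F : Finset ℝ := insert 1 (hfin.toFinset.image
      (fun pq : ℕ × ℕ => |(pq.1 : ℝ) - (pq.2 : ℝ) * π|)) with hF
  have hFne : F.Nonempty := ⟨1, Finset.mem_insert_self _ _⟩
  set ε := F.min' hFne with hεdef
  have hεpos : 0 < ε := by
    apply (Finset.lt_min'_iff F hFne).mpr
    intro y hy
    rcases Finset.mem_insert.mp hy with rfl | hy
    · norm_num
    · obtain ⟨pq, hpq, rfl⟩ := Finset.mem_image.mp hy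
      rw [Set.Finite.mem_toFinset] at hpq
      obtain ⟨hp, hq, -, -⟩ := hpq
      have hne : (pq.1 : ℝ) - (pq.2 : ℝ) * π ≠ 0 := by
        intro h
        have hq' : (0:ℝ) < pq.2 := by exact_mod_cast hq
        have : π = ((pq.1 : ℚ) / (pq.2 : ℚ) : ℚ) := by
          push_cast
          field_simp at h ⊢
          linarith
        exact irrational_pi.ne_rat _ this
      exact abs_pos.mpr hne
  refine ⟨2 / π * min 1 ε, by positivity, 2, ?_⟩
  intro n hn
  have hn1 : (1:ℝ) ≤ n := by exact_mod_cast Nat.one_le_of_lt hn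
  have hn2 : (2:ℝ) ≤ n := by exact_mod_cast hn
  set m : ℤ := round ((n : ℝ) / π) with hm
  have hround : |(n : ℝ) / π - m| ≤ 1 / 2 := abs_sub_round _
  have hm1 : 1 ≤ m := by
    have h2 := (abs_le.mp hround).2
    have h3 : (1:ℝ)/2 < (n:ℝ)/π := by
      rw [lt_div_iff₀ hπ]; nlinarith
    have h4 : (0:ℝ) < m := by linarith
    have : (0:ℤ) < m := by exact_mod_cast h4
    omega
  have hm0 : (0:ℝ) < m := by exact_mod_cast hm1
  have hmn : (m : ℝ) ≤ n := by
    have h1 := (abs_le.mp hround).1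
    have hle : (n:ℝ)/π ≤ (n:ℝ)/3 := by
      apply div_le_div_of_nonneg_left (by linarith) (by norm_num) (by linarith)
    linarith
  set x : ℝ := (n : ℝ) - m * π with hxdef
  have hx2 : |x| ≤ π / 2 := by
    have : x = π * ((n:ℝ)/π - m) := by field_simp [hxdef]; ring
    rw [this, abs_mul, abs_of_pos hπ]
    calc π * |(n:ℝ)/π - m| ≤ π * (1/2) := by
          exact mul_le_mul_of_nonneg_left hround hπ.le
      _ = π / 2 := by ring
  have hsin : |Real.sin n| = |Real.sin x| := by
    have := Real.sin_add_int_mul_pi x m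
    have hx : x + m * π = n := by rw [hxdef]; ring
    rw [hx] at this
    have h1 : |((-1:ℝ)) ^ m| = 1 := by
      rcases Int.even_or_odd m with he | ho
      · rw [he.neg_one_zpow]; norm_num
      · rw [Odd.neg_one_zpow ho]; norm_num
    rw [this, abs_mul, h1, one_mul]
  have hjordan : 2 / π * |x| ≤ |Real.sin n| := hsin ▸ jordan_abs hx2
  -- arithmetic with p, q, d
  set mn : ℕ := m.toNat with hmn'
  have hmnat : (mn : ℝ) = (m : ℝ) := by
    have h0 : (m.toNat : ℤ) = m := Int.toNat_of_nonneg (by omega)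
    rw [hmn']
    exact_mod_cast congrArg (fun z : ℤ => (z : ℝ)) h0
  have hmn0 : 0 < mn := by
    rw [hmn']; omega
  set d : ℕ := Nat.gcd n mn with hd
  have hd0 : 0 < d := Nat.gcd_pos_of_pos_left _ (by omega)
  set p : ℕ := n / d with hp
  set q : ℕ := mn / d with hq
  have hnp : n = d * p := (Nat.mul_div_cancel' (Nat.gcd_dvd_left n mn)).symm
  have hmq : mn = d * q := (Nat.mul_div_cancel' (Nat.gcd_dvd_right n mn)).symm
  have hp0 : 0 < p := by
    rcases Nat.eq_zero_or_pos p with h | h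
    · rw [h, mul_zero] at hnp; omega
    · exact h
  have hq0 : 0 < q := by
    rcases Nat.eq_zero_or_pos q with h | h
    · rw [h, mul_zero] at hmq; omega
    · exact h
  have hcop : Nat.Coprime p q := Nat.coprime_div_gcd_div_gcd hd0
  have hxd : x = (d : ℝ) * ((p : ℝ) - (q : ℝ) * π) := by
    rw [hxdef, ← hmnat, hnp, hmq]
    push_cast
    ring
  have hnk1 : (1:ℝ) ≤ (n:ℝ) ^ (k - 1) := Real.one_le_rpow hn1 (by linarith)
  have hnkpos : (0:ℝ) < (n:ℝ) ^ (k - 1) := by positivity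
  by_cases hmem : (p, q) ∈ S
  · -- exceptional case: |x| ≥ d * ε ≥ ε
    have hεle : ε ≤ |(p : ℝ) - (q : ℝ) * π| := by
      apply Finset.min'_le
      exact Finset.mem_insert_of_mem (Finset.mem_image.mpr
        ⟨(p, q), (Set.Finite.mem_toFinset _).mpr hmem, rfl⟩)
    have hxge : ε ≤ |x| := by
      rw [hxd, abs_mul, abs_of_nonneg (by positivity : (0:ℝ) ≤ (d:ℝ))]
      have hd1 : (1:ℝ) ≤ d := by exact_mod_cast hd0
      nlinarith [abs_nonneg ((p : ℝ) - (q : ℝ) * π)]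
    have hc : (0:ℝ) < 2 / π := by positivity
    have h1 : 2 / π * min 1 ε / (n:ℝ) ^ (k-1) ≤ 2 / π * ε := by
      rw [div_le_iff₀ hnkpos]
      calc 2 / π * min 1 ε ≤ 2 / π * ε := by
            have := min_le_right (1:ℝ) ε
            nlinarith
        _ = 2 / π * ε * 1 := by ring
        _ ≤ 2 / π * ε * (n:ℝ) ^ (k-1) :=
            mul_le_mul_of_nonneg_left hnk1 (by positivity)
    calc 2 / π * min 1 ε / (n:ℝ) ^ (k-1) ≤ 2 / π * ε := h1
      _ ≤ 2 / π * |x| := mul_le_mul_of_nonneg_left hxge hc.le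
      _ ≤ |Real.sin n| := hjordan
  · -- generic case: |π - p/q| ≥ 1/q^k
    have hq' : (0:ℝ) < q := by exact_mod_cast hq0
    have hgood : 1 / (q : ℝ) ^ k ≤ |π - (p : ℝ) / (q : ℝ)| := by
      by_contra h
      push_neg at h
      exact hmem ⟨hp0, hq0, hcop, h⟩
    have hnm : (n : ℝ) / m = (p : ℝ) / q := by
      rw [← hmnat, hnp, hmq]
      push_cast
      rw [div_eq_div_iff (by positivity) (by positivity)]
      ring
    have hxm : |x| = (m : ℝ) * |π - (n:ℝ)/m| := by
      have hneg : (m:ℝ) * (π - (n:ℝ)/m) = -x := by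
        rw [hxdef]; field_simp; ring
      calc |x| = |-x| := (abs_neg x).symm
        _ = |(m:ℝ) * (π - (n:ℝ)/m)| := by rw [hneg]
        _ = (m:ℝ) * |π - (n:ℝ)/m| := by rw [abs_mul, abs_of_pos hm0]
    have hqm : (q : ℝ) ≤ (m : ℝ) := by
      rw [← hmnat]
      exact_mod_cast Nat.le_of_dvd hmn0 ⟨d, by rw [hmq]; ring⟩
    have hqk : (q : ℝ) ^ k ≤ (m : ℝ) ^ k :=
      Real.rpow_le_rpow hq'.le hqm (by linarith)
    have hxlb : (m : ℝ) ^ (1 - k) ≤ |x| := by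
      rw [hxm, hnm]
      have h1 : (m:ℝ) / (m:ℝ)^k ≤ (m:ℝ) * |π - (p:ℝ)/q| := by
        rw [div_le_iff₀ (by positivity)]
        calc (m:ℝ) = (m:ℝ) * ((q:ℝ)^k * (1/(q:ℝ)^k)) := by
              field_simp
          _ ≤ (m:ℝ) * ((m:ℝ)^k * |π - (p:ℝ)/q|) := by
              apply mul_le_mul_of_nonneg_left _ hm0.le
              apply mul_le_mul hqk hgood (by positivity) (by positivity)
          _ = (m:ℝ) * |π - (p:ℝ)/q| * (m:ℝ)^k := by ring
      have h2 : (m:ℝ) ^ (1-k) = (m:ℝ) / (m:ℝ)^k := by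
        rw [Real.rpow_sub hm0, Real.rpow_one]
      linarith [h2 ▸ h1]
    have hmlb : (n:ℝ) ^ (1 - k) ≤ (m:ℝ) ^ (1 - k) :=
      Real.rpow_le_rpow_of_nonpos hm0 hmn (by linarith)
    have hninv : (n:ℝ) ^ (1 - k) = 1 / (n:ℝ) ^ (k - 1) := by
      rw [show (1 - k) = -(k - 1) by ring, Real.rpow_neg (by positivity), one_div]
    have hchain : 2 / π * min 1 ε / (n:ℝ) ^ (k-1) ≤ 2 / π * |x| := by
      have h1 : 2 / π * min 1 ε / (n:ℝ) ^ (k-1) ≤ 2 / π * (1 / (n:ℝ) ^ (k-1)) := by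
        rw [mul_div_assoc]
        gcongr
        exact min_le_left _ _
      have h2 : 2 / π * (1 / (n:ℝ) ^ (k-1)) ≤ 2 / π * |x| := by
        rw [← hninv]
        exact mul_le_mul_of_nonneg_left (hmlb.trans hxlb) (by positivity)
      exact h1.trans h2
    exact hchain.trans hjordan
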